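/- For α, β > 0, the partial antiderivative of the squared breather at a fixed time satisfies: (1/2)∫_{−∞}^x B(0,s)² ds = 2β[α² + β² + αβ sin(2αx) − β² cos(2αx) + α²(sinh(2βx)+cosh(2βx))] / [α² + β² + α² cosh(2βx) − β² cos(2αx)], where B(0,x) = 2√2 ∂_x[arctan((β/α) sin(αx)/cosh(βx))]. -/

import Mathlib

open Real Set MeasureTheory Filter

noncomputable def breather0 (α β x : ℝ) : ℝ :=
  2 * Real.sqrt 2 *
    deriv (fun x' : ℝ =>
      Real.arctan ((β / α) * Real.sin (α * x') / Real.cosh (β * x'))) x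

section BreatherAux

variable {α β : ℝ}

lemma breatherQpos (hα : 0 < α) (s : ℝ) :
    0 < α ^ 2 * Real.cosh (β * s) ^ 2 + β ^ 2 * Real.sin (α * s) ^ 2 := by
  have h := Real.cosh_pos (β * s)
  nlinarith [sq_nonneg (β * Real.sin (α * s)), mul_pos (mul_pos hα hα) (mul_pos h h)]

lemma breather_hd_sin (α : ℝ) (s : ℝ) :
    HasDerivAt (fun t : ℝ => Real.sin (α * t)) (α * Real.cos (α * s)) s := by
  simpa [mul_comm, Function.comp_def] using (Real.hasDerivAt_sin (α * s)).comp s ((hasDerivAt_id s).const_mul α)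

lemma breather_hd_cos (α : ℝ) (s : ℝ) :
    HasDerivAt (fun t : ℝ => Real.cos (α * t)) (-(α * Real.sin (α * s))) s := by
  simpa [mul_comm, Function.comp_def] using (Real.hasDerivAt_cos (α * s)).comp s ((hasDerivAt_id s).const_mul α)

lemma breather_hd_sinh (β : ℝ) (s : ℝ) :
    HasDerivAt (fun t : ℝ => Real.sinh (β * t)) (β * Real.cosh (β * s)) s := by
  simpa [mul_comm, Function.comp_def] using (Real.hasDerivAt_sinh (β * s)).comp s ((hasDerivAt_id s).const_mul β)

lemma breather_hd_cosh (β : ℝ) (s : ℝ) :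
    HasDerivAt (fun t : ℝ => Real.cosh (β * t)) (β * Real.sinh (β * s)) s := by
  simpa [mul_comm, Function.comp_def] using (Real.hasDerivAt_cosh (β * s)).comp s ((hasDerivAt_id s).const_mul β)

/-- The explicit antiderivative has the squared breather (halved) as derivative. -/
lemma breather_hasDerivAt_F (hα : 0 < α) (s : ℝ) :
    HasDerivAt (fun t : ℝ =>
        2 * β * (α ^ 2 * (Real.cosh (β * t) + Real.sinh (β * t)) * Real.cosh (β * t)
            + α * β * (Real.sin (α * t) * Real.cos (α * t)) + β ^ 2 * Real.sin (α * t) ^ 2)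
          / (α ^ 2 * Real.cosh (β * t) ^ 2 + β ^ 2 * Real.sin (α * t) ^ 2))
      (4 * α ^ 2 * β ^ 2 *
          (α * Real.cos (α * s) * Real.cosh (β * s) - β * Real.sin (α * s) * Real.sinh (β * s)) ^ 2
        / (α ^ 2 * Real.cosh (β * s) ^ 2 + β ^ 2 * Real.sin (α * s) ^ 2) ^ 2) s := by
  set c := Real.cos (α * s); set si := Real.sin (α * s)
  set ch := Real.cosh (β * s); set sh := Real.sinh (β * s)
  have hP : HasDerivAt (fun t : ℝ =>
      2 * β * (α ^ 2 * (Real.cosh (β * t) + Real.sinh (β * t)) * Real.cosh (β * t)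
          + α * β * (Real.sin (α * t) * Real.cos (α * t)) + β ^ 2 * Real.sin (α * t) ^ 2))
      (2 * β * (α ^ 2 * β * (ch + sh) * ch + α ^ 2 * β * (ch + sh) * sh
        + α ^ 2 * β * (c ^ 2 - si ^ 2) + 2 * α * β ^ 2 * (si * c))) s := by
    have h1 : HasDerivAt (fun t : ℝ =>
        α ^ 2 * (Real.cosh (β * t) + Real.sinh (β * t)) * Real.cosh (β * t))
        (α ^ 2 * β * (ch + sh) * ch + α ^ 2 * β * (ch + sh) * sh) s := by
      have := (((breather_hd_cosh β s).add (breather_hd_sinh β s)).const_mul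
        (α ^ 2)).mul (breather_hd_cosh β s)
      exact this.congr_deriv (by simp only [Pi.add_apply]; ring)
    have h2 : HasDerivAt (fun t : ℝ => α * β * (Real.sin (α * t) * Real.cos (α * t)))
        (α ^ 2 * β * (c ^ 2 - si ^ 2)) s := by
      have := (((breather_hd_sin α s).mul (breather_hd_cos α s))).const_mul (α * β)
      exact this.congr_deriv (by ring)
    have h3 : HasDerivAt (fun t : ℝ => β ^ 2 * Real.sin (α * t) ^ 2)
        (2 * α * β ^ 2 * (si * c)) s := by
      have := (((breather_hd_sin α s).pow 2)).const_mul (β ^ 2)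
      exact this.congr_deriv (by ring)
    have := ((h1.add h2).add h3).const_mul (2 * β)
    exact this.congr_deriv (by ring)
  have hQ : HasDerivAt (fun t : ℝ =>
      α ^ 2 * Real.cosh (β * t) ^ 2 + β ^ 2 * Real.sin (α * t) ^ 2)
      (2 * α ^ 2 * β * ch * sh + 2 * α * β ^ 2 * si * c) s := by
    have := (((breather_hd_cosh β s).pow 2).const_mul (α ^ 2)).add
      (((breather_hd_sin α s).pow 2).const_mul (β ^ 2))
    exact this.congr_deriv (by ring)
  have hne : α ^ 2 * Real.cosh (β * s) ^ 2 + β ^ 2 * Real.sin (α * s) ^ 2 ≠ 0 :=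
    (breatherQpos hα s).ne'
  have H := hP.div hQ hne
  refine H.congr_deriv (Eq.symm ?_)
  rw [div_eq_div_iff (by positivity) (by positivity)]
  have h1 : si ^ 2 + c ^ 2 = 1 := Real.sin_sq_add_cos_sq (α * s)
  have h2 : ch ^ 2 - sh ^ 2 = 1 := Real.cosh_sq_sub_sinh_sq (β * s)
  linear_combination (2 * α ^ 2 * β ^ 2 * (α ^ 2 * ch ^ 2 + β ^ 2 * si ^ 2)
      * (α ^ 2 * Real.cosh (β * s) ^ 2 + β ^ 2 * Real.sin (α * s) ^ 2) ^ 2) * h1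
    + (-2 * α ^ 2 * β ^ 2 * (α ^ 2 * ch ^ 2 + β ^ 2 * si ^ 2)
      * (α ^ 2 * Real.cosh (β * s) ^ 2 + β ^ 2 * Real.sin (α * s) ^ 2) ^ 2) * h2

/-- The squared breather in closed form. -/
lemma breather_sq (hα : 0 < α) (s : ℝ) :
    breather0 α β s ^ 2 =
      8 * α ^ 2 * β ^ 2 *
          (α * Real.cos (α * s) * Real.cosh (β * s)
            - β * Real.sin (α * s) * Real.sinh (β * s)) ^ 2
        / (α ^ 2 * Real.cosh (β * s) ^ 2 + β ^ 2 * Real.sin (α * s) ^ 2) ^ 2 := by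
  have hchne : Real.cosh (β * s) ≠ 0 := (Real.cosh_pos _).ne'
  have hu : HasDerivAt (fun t : ℝ => β / α * Real.sin (α * t) / Real.cosh (β * t))
      ((β / α * (α * Real.cos (α * s)) * Real.cosh (β * s)
        - β / α * Real.sin (α * s) * (β * Real.sinh (β * s))) / Real.cosh (β * s) ^ 2) s :=
    ((breather_hd_sin α s).const_mul (β / α)).div (breather_hd_cosh β s) hchne
  have harc := (Real.hasDerivAt_arctan _).comp s hu
  have hd : deriv (fun x' : ℝ =>
      Real.arctan (β / α * Real.sin (α * x') / Real.cosh (β * x'))) s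
      = 1 / (1 + (β / α * Real.sin (α * s) / Real.cosh (β * s)) ^ 2) *
        ((β / α * (α * Real.cos (α * s)) * Real.cosh (β * s)
          - β / α * Real.sin (α * s) * (β * Real.sinh (β * s))) / Real.cosh (β * s) ^ 2) := by
    exact HasDerivAt.deriv (by simpa [Function.comp_def] using harc)
  rw [breather0, hd]
  rw [mul_pow, mul_pow, Real.sq_sqrt (by norm_num : (0:ℝ) ≤ 2)]
  have h1 : (1 : ℝ) + (β / α * Real.sin (α * s) / Real.cosh (β * s)) ^ 2 ≠ 0 := by positivity
  have hQ := (breatherQpos hα (β := β) s).ne'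
  field_simp
  ring

lemma breather_cosh_tendsto (hβ : 0 < β) :
    Tendsto (fun s : ℝ => Real.cosh (β * s)) atBot atTop := by
  have h1 : Tendsto (fun s : ℝ => Real.exp (-(β * s)) / 2) atBot atTop := by
    apply Tendsto.atTop_div_const two_pos
    apply Real.tendsto_exp_atTop.comp
    exact (tendsto_neg_atBot_atTop).comp (tendsto_id.const_mul_atBot hβ)
  apply tendsto_atTop_mono _ h1
  intro s
  rw [Real.cosh_eq]
  have := Real.exp_pos (β * s)
  linarith

lemma breather_tendsto_F (hα : 0 < α) (hβ : 0 < β) :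
    Tendsto (fun t : ℝ =>
        2 * β * (α ^ 2 * (Real.cosh (β * t) + Real.sinh (β * t)) * Real.cosh (β * t)
            + α * β * (Real.sin (α * t) * Real.cos (α * t)) + β ^ 2 * Real.sin (α * t) ^ 2)
          / (α ^ 2 * Real.cosh (β * t) ^ 2 + β ^ 2 * Real.sin (α * t) ^ 2))
      atBot (nhds 0) := by
  apply squeeze_zero_norm' (a := fun s : ℝ =>
      2 * β * (α ^ 2 + α * β + β ^ 2) / (α ^ 2 * Real.cosh (β * s) ^ 2))
  · filter_upwards [eventually_le_atBot (0 : ℝ)] with s hs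
    have hch := Real.cosh_pos (β * s)
    have hQ := breatherQpos (β := β) hα s
    have hech : (Real.cosh (β * s) + Real.sinh (β * s)) * Real.cosh (β * s) ≤ 1 := by
      rw [Real.cosh_add_sinh, Real.cosh_eq]
      have h1 : Real.exp (β * s) ≤ 1 := Real.exp_le_one_iff.mpr (by nlinarith)
      have h2 : Real.exp (β * s) * Real.exp (-(β * s)) = 1 := by
        rw [← Real.exp_add]; simp
      nlinarith [Real.exp_pos (β * s), Real.exp_pos (-(β * s))]
    have hech0 : 0 ≤ (Real.cosh (β * s) + Real.sinh (β * s)) * Real.cosh (β * s) := by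
      have := Real.cosh_add_sinh (β * s)
      nlinarith [Real.exp_pos (β * s)]
    rw [Real.norm_eq_abs, abs_div, abs_of_pos hQ]
    apply div_le_div₀ (by positivity) _ (by positivity)
      (show α ^ 2 * Real.cosh (β * s) ^ 2 ≤ _ by nlinarith [sq_nonneg (β * Real.sin (α * s))])
    have hsc : |Real.sin (α * s) * Real.cos (α * s)| ≤ 1 := by
      rw [abs_mul]
      have := Real.abs_sin_le_one (α * s)
      have := Real.abs_cos_le_one (α * s)
      nlinarith [abs_nonneg (Real.sin (α * s)), abs_nonneg (Real.cos (α * s))]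
    have hss : Real.sin (α * s) ^ 2 ≤ 1 := Real.sin_sq_le_one (α * s)
    calc |2 * β * (α ^ 2 * (Real.cosh (β * s) + Real.sinh (β * s)) * Real.cosh (β * s)
            + α * β * (Real.sin (α * s) * Real.cos (α * s)) + β ^ 2 * Real.sin (α * s) ^ 2)|
        ≤ 2 * β * (α ^ 2 * ((Real.cosh (β * s) + Real.sinh (β * s)) * Real.cosh (β * s))
            + α * β * |Real.sin (α * s) * Real.cos (α * s)| + β ^ 2 * Real.sin (α * s) ^ 2) := by
          rw [abs_mul]
          rw [abs_of_pos (by positivity : (0:ℝ) < 2 * β)]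
          apply mul_le_mul_of_nonneg_left _ (by positivity)
          calc |α ^ 2 * (Real.cosh (β * s) + Real.sinh (β * s)) * Real.cosh (β * s)
              + α * β * (Real.sin (α * s) * Real.cos (α * s)) + β ^ 2 * Real.sin (α * s) ^ 2|
              ≤ |α ^ 2 * (Real.cosh (β * s) + Real.sinh (β * s)) * Real.cosh (β * s)|
                + |α * β * (Real.sin (α * s) * Real.cos (α * s))|
                + |β ^ 2 * Real.sin (α * s) ^ 2| := by
                  exact (abs_add_le _ _).trans (by gcongr; exact abs_add_le _ _)
            _ = α ^ 2 * ((Real.cosh (β * s) + Real.sinh (β * s)) * Real.cosh (β * s))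
                + α * β * |Real.sin (α * s) * Real.cos (α * s)|
                + β ^ 2 * Real.sin (α * s) ^ 2 := by
                  rw [abs_mul, abs_mul, abs_mul, abs_mul,
                    abs_of_nonneg (sq_nonneg α), abs_of_pos hα, abs_of_pos hβ,
                    abs_of_nonneg (show (0:ℝ) ≤ Real.cosh (β * s) + Real.sinh (β * s) by
                      nlinarith [Real.cosh_add_sinh (β * s), Real.exp_pos (β * s)]),
                    abs_of_pos hch,
                    abs_of_nonneg (show (0:ℝ) ≤ β ^ 2 * Real.sin (α * s) ^ 2 by positivity)]
                  ring
      _ ≤ 2 * β * (α ^ 2 + α * β + β ^ 2) := by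
          apply mul_le_mul_of_nonneg_left _ (by positivity)
          have h3 : α ^ 2 * ((Real.cosh (β * s) + Real.sinh (β * s)) * Real.cosh (β * s))
              ≤ α ^ 2 := by nlinarith [sq_nonneg α]
          nlinarith [sq_nonneg α, sq_nonneg β, mul_pos hα hβ]
  · apply Tendsto.div_atTop tendsto_const_nhds
    apply Tendsto.const_mul_atTop (by positivity : (0:ℝ) < α ^ 2)
    have := (breather_cosh_tendsto hβ)
    exact (this.atTop_mul_atTop₀ this).congr (fun s => by ring)

lemma breather_exp_integrableOn_Iic {b : ℝ} (hb : 0 < b) (x : ℝ) :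
    IntegrableOn (fun s : ℝ => Real.exp (b * s)) (Iic x) := by
  refine integrableOn_Iic_of_intervalIntegral_norm_bounded (Real.exp (b * x) / b) x
    (fun i => ((Real.continuous_exp.comp (continuous_const.mul continuous_id)).integrableOn_Ioc))
    tendsto_id ?_
  filter_upwards with i
  simp only [id_eq]
  have : (∫ s in i..x, ‖Real.exp (b * s)‖) = ∫ s in i..x, Real.exp (b * s) := by
    congr 1; ext s; exact Real.norm_of_nonneg (Real.exp_pos _).le
  rw [this, intervalIntegral.integral_comp_mul_left (fun t => Real.exp t) hb.ne',
    integral_exp, smul_eq_mul]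
  rw [inv_mul_eq_div, div_le_div_iff₀ hb hb]
  nlinarith [Real.exp_pos (b * i)]

lemma breather_abs_sinh_le_cosh (t : ℝ) : |Real.sinh t| ≤ Real.cosh t := by
  rw [abs_le]
  constructor
  · nlinarith [Real.cosh_add_sinh t, Real.exp_pos t]
  · nlinarith [Real.cosh_sub_sinh t, Real.exp_pos (-t)]

lemma breather_gg_integrable (hα : 0 < α) (hβ : 0 < β) (x : ℝ) :
    IntegrableOn (fun s : ℝ =>
      4 * α ^ 2 * β ^ 2 *
          (α * Real.cos (α * s) * Real.cosh (β * s)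
            - β * Real.sin (α * s) * Real.sinh (β * s)) ^ 2
        / (α ^ 2 * Real.cosh (β * s) ^ 2 + β ^ 2 * Real.sin (α * s) ^ 2) ^ 2) (Iic x) := by
  have hexp : IntegrableOn (fun s : ℝ => 16 * β ^ 2 * (α + β) ^ 2 / α ^ 2 * Real.exp (2 * β * s))
      (Iic x) := (breather_exp_integrableOn_Iic (by positivity) x).const_mul _
  refine hexp.mono' ?_ ?_
  · apply Continuous.aestronglyMeasurable
    apply Continuous.div (by fun_prop) (by fun_prop)
    intro s
    exact pow_ne_zero 2 (breatherQpos hα s).ne'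
  · filter_upwards with s
    set c := Real.cos (α * s); set si := Real.sin (α * s)
    set ch := Real.cosh (β * s); set sh := Real.sinh (β * s)
    have hch : 0 < ch := Real.cosh_pos (β * s)
    have hQ : 0 < α ^ 2 * ch ^ 2 + β ^ 2 * si ^ 2 := breatherQpos hα s
    have hT : |α * c * ch - β * si * sh| ≤ (α + β) * ch := by
      have h1 : |α * c * ch| ≤ α * ch := by
        rw [abs_mul, abs_mul, abs_of_pos hα, abs_of_pos hch]
        have hcc : |c| ≤ 1 := Real.abs_cos_le_one (α * s)
        nlinarith [mul_le_mul_of_nonneg_left hcc (show (0:ℝ) ≤ α * ch by positivity)]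
      have h2 : |β * si * sh| ≤ β * ch := by
        rw [abs_mul, abs_mul, abs_of_pos hβ]
        have h3 : |si| ≤ 1 := Real.abs_sin_le_one (α * s)
        have h4 : |sh| ≤ ch := breather_abs_sinh_le_cosh (β * s)
        nlinarith [mul_le_mul h3 h4 (abs_nonneg sh) zero_le_one, abs_nonneg sh, abs_nonneg si]
      calc |α * c * ch - β * si * sh| ≤ |α * c * ch| + |β * si * sh| := abs_sub _ _
        _ ≤ (α + β) * ch := by linarith
    have hT2 : (α * c * ch - β * si * sh) ^ 2 ≤ (α + β) ^ 2 * ch ^ 2 := by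
      have := sq_abs (α * c * ch - β * si * sh)
      nlinarith [abs_nonneg (α * c * ch - β * si * sh),
        mul_pos (by positivity : (0:ℝ) < α + β) hch]
    have h4 : 1 ≤ 4 * ch ^ 2 * Real.exp (2 * β * s) := by
      have h3 : Real.exp (-(β * s)) ≤ 2 * ch := by
        rw [show ch = Real.cosh (β * s) from rfl, Real.cosh_eq]
        nlinarith [Real.exp_pos (β * s)]
      have hmul : Real.exp (-(β * s)) * Real.exp (-(β * s)) * Real.exp (2 * β * s) = 1 := by
        rw [← Real.exp_add, ← Real.exp_add,
          show -(β * s) + -(β * s) + 2 * β * s = 0 by ring, Real.exp_zero]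
      nlinarith [Real.exp_pos (-(β * s)), Real.exp_pos (2 * β * s),
        mul_le_mul h3 h3 (Real.exp_pos (-(β * s))).le (by positivity)]
    rw [Real.norm_eq_abs, abs_of_nonneg (by positivity)]
    calc 4 * α ^ 2 * β ^ 2 * (α * c * ch - β * si * sh) ^ 2
          / (α ^ 2 * ch ^ 2 + β ^ 2 * si ^ 2) ^ 2
        ≤ 4 * α ^ 2 * β ^ 2 * ((α + β) ^ 2 * ch ^ 2) / (α ^ 2 * ch ^ 2) ^ 2 := by
          have hnum : 4 * α ^ 2 * β ^ 2 * (α * c * ch - β * si * sh) ^ 2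
              ≤ 4 * α ^ 2 * β ^ 2 * ((α + β) ^ 2 * ch ^ 2) := by
            nlinarith [mul_le_mul_of_nonneg_left hT2
              (show (0:ℝ) ≤ 4 * α ^ 2 * β ^ 2 by positivity)]
          have hden : (α ^ 2 * ch ^ 2) ^ 2 ≤ (α ^ 2 * ch ^ 2 + β ^ 2 * si ^ 2) ^ 2 := by
            have hle : α ^ 2 * ch ^ 2 ≤ α ^ 2 * ch ^ 2 + β ^ 2 * si ^ 2 := by
              nlinarith [sq_nonneg (β * si)]
            exact pow_le_pow_left₀ (by positivity) hle 2
          exact div_le_div₀ (by positivity) hnum (by positivity) hden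
      _ = 4 * β ^ 2 * (α + β) ^ 2 / (α ^ 2 * ch ^ 2) := by
          field_simp
      _ ≤ 16 * β ^ 2 * (α + β) ^ 2 / α ^ 2 * Real.exp (2 * β * s) := by
          rw [div_le_iff₀ (by positivity)]
          have h5 : 0 ≤ 4 * β ^ 2 * (α + β) ^ 2 := by positivity
          have := mul_le_mul_of_nonneg_left h4 h5
          calc 4 * β ^ 2 * (α + β) ^ 2 = 4 * β ^ 2 * (α + β) ^ 2 * 1 := by ring
            _ ≤ 4 * β ^ 2 * (α + β) ^ 2 * (4 * ch ^ 2 * Real.exp (2 * β * s)) := this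
            _ = 16 * β ^ 2 * (α + β) ^ 2 / α ^ 2 * Real.exp (2 * β * s) * (α ^ 2 * ch ^ 2) := by
                field_simp; ring

end BreatherAux

theorem breather_partial_mass (α β : ℝ) (hα : 0 < α) (hβ : 0 < β) (x : ℝ) :
    (1 / 2) * ∫ s in Set.Iic x, (breather0 α β s) ^ 2 =
      2 * β * (α ^ 2 + β ^ 2 + α * β * Real.sin (2 * α * x)
          - β ^ 2 * Real.cos (2 * α * x)
          + α ^ 2 * (Real.sinh (2 * β * x) + Real.cosh (2 * β * x))) /
        (α ^ 2 + β ^ 2 + α ^ 2 * Real.cosh (2 * β * x)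
          - β ^ 2 * Real.cos (2 * α * x)) := by
  have hFTC := integral_Iic_of_hasDerivAt_of_tendsto'
    (a := x) (m := 0)
    (f := fun t : ℝ =>
        2 * β * (α ^ 2 * (Real.cosh (β * t) + Real.sinh (β * t)) * Real.cosh (β * t)
            + α * β * (Real.sin (α * t) * Real.cos (α * t)) + β ^ 2 * Real.sin (α * t) ^ 2)
          / (α ^ 2 * Real.cosh (β * t) ^ 2 + β ^ 2 * Real.sin (α * t) ^ 2))
    (f' := fun s : ℝ =>
      4 * α ^ 2 * β ^ 2 *
          (α * Real.cos (α * s) * Real.cosh (β * s)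
            - β * Real.sin (α * s) * Real.sinh (β * s)) ^ 2
        / (α ^ 2 * Real.cosh (β * s) ^ 2 + β ^ 2 * Real.sin (α * s) ^ 2) ^ 2)
    (fun s _ => breather_hasDerivAt_F hα s)
    (breather_gg_integrable hα hβ x)
    (breather_tendsto_F hα hβ)
  have hcongr : ∫ s in Set.Iic x, (breather0 α β s) ^ 2
      = ∫ s in Set.Iic x, 2 * (4 * α ^ 2 * β ^ 2 *
          (α * Real.cos (α * s) * Real.cosh (β * s)
            - β * Real.sin (α * s) * Real.sinh (β * s)) ^ 2
        / (α ^ 2 * Real.cosh (β * s) ^ 2 + β ^ 2 * Real.sin (α * s) ^ 2) ^ 2) := by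
    congr 1
    funext s
    rw [breather_sq hα s]
    ring
  rw [hcongr, MeasureTheory.integral_const_mul, hFTC, sub_zero]
  have h1 : Real.sin (α * x) ^ 2 + Real.cos (α * x) ^ 2 = 1 := Real.sin_sq_add_cos_sq (α * x)
  have h2 : Real.cosh (β * x) ^ 2 - Real.sinh (β * x) ^ 2 = 1 := Real.cosh_sq_sub_sinh_sq (β * x)
  have e1 : Real.sin (2 * α * x) = 2 * Real.sin (α * x) * Real.cos (α * x) := by
    rw [show 2 * α * x = 2 * (α * x) by ring, Real.sin_two_mul]
  have e2 : Real.cos (2 * α * x) = 2 * Real.cos (α * x) ^ 2 - 1 := by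
    rw [show 2 * α * x = 2 * (α * x) by ring, Real.cos_two_mul]
  have e3 : Real.sinh (2 * β * x) = 2 * Real.sinh (β * x) * Real.cosh (β * x) := by
    rw [show 2 * β * x = 2 * (β * x) by ring, Real.sinh_two_mul]
  have e4 : Real.cosh (2 * β * x) = Real.cosh (β * x) ^ 2 + Real.sinh (β * x) ^ 2 := by
    rw [show 2 * β * x = 2 * (β * x) by ring, Real.cosh_two_mul]
  rw [e1, e2, e3, e4]
  have hQ := breatherQpos (β := β) hα x
  have hD : 0 < α ^ 2 + β ^ 2 + α ^ 2 * (Real.cosh (β * x) ^ 2 + Real.sinh (β * x) ^ 2)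
      - β ^ 2 * (2 * Real.cos (α * x) ^ 2 - 1) := by nlinarith
  have hhalf : ∀ y : ℝ, (1 / 2 : ℝ) * (2 * y) = y := fun y => by ring
  rw [hhalf, div_eq_div_iff hQ.ne' hD.ne']
  linear_combination ((-4) * α * β ^ 4 * Real.sin (α * x) * Real.cos (α * x)
      + (-4) * α ^ 2 * β ^ 3 * Real.sinh (β * x) * Real.cosh (β * x)) * h1
    + ((-2) * α ^ 3 * β ^ 2 * Real.sin (α * x) * Real.cos (α * x)
      + (-2) * α ^ 4 * β * Real.sinh (β * x) * Real.cosh (β * x)) * h2
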